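/- Let H be an m×m Hermitian matrix such that all pairs of columns are strongly cospectral. Then every eigenvalue of H is simple, and for every spectral projection Eⱼ and all indices u,v: |(Eⱼ)ᵤᵥ| = 1/m and (Eⱼ)ᵤᵤ = 1/m. -/

import Mathlib

open Matrix

theorem stmt13 {m r : ℕ} (hm : 0 < m) (H : Matrix (Fin m) (Fin m) ℂ)
    (lam : Fin r → ℝ) (E : Fin r → Matrix (Fin m) (Fin m) ℂ)
    (hH : H.IsHermitian)
    (hlam : Function.Injective lam)
    (hEherm : ∀ j, (E j).IsHermitian)
    (hEidem : ∀ j, E j * E j = E j)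
    (hEorth : ∀ j k, j ≠ k → E j * E k = 0)
    (hEsum : ∑ j, E j = 1)
    (hEnz : ∀ j, E j ≠ 0)
    (hspec : H = ∑ j, (lam j : ℂ) • E j)
    (hsc : ∀ u v : Fin m, ∀ j, ∃ c : ℂ, ‖c‖ = 1 ∧
      (E j) *ᵥ (Pi.single u 1 : Fin m → ℂ) = c • ((E j) *ᵥ (Pi.single v 1 : Fin m → ℂ))) :
    (∀ j, (E j).rank = 1) ∧
    (∀ j, ∀ u v : Fin m, ‖(E j) u v‖ = (m : ℝ)⁻¹ ∧ (E j) u u = ((m : ℂ))⁻¹) := by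
  set v₀ : Fin m := ⟨0, hm⟩ with hv₀
  have key : ∀ j, ∃ c : Fin m → ℂ, (∀ u, ‖c u‖ = 1) ∧
      (∀ u i, (E j) i u = c u * (E j) i v₀) := by
    intro j
    choose c h1 h2 using fun u => hsc u v₀ j
    refine ⟨c, h1, fun u i => ?_⟩
    have := congrFun (h2 u) i
    simpa using this
  have main : ∀ j, ∃ c : Fin m → ℂ, (∀ u, ‖c u‖ = 1) ∧
      (∀ u v, (E j) u v = (starRingEnd ℂ) (c u) * c v * ((E j) v₀ v₀)) ∧
      ((E j) v₀ v₀ = ((m : ℂ))⁻¹) := by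
    intro j
    obtain ⟨c, hc1, hc2⟩ := key j
    have herm : ∀ u v, (E j) u v = (starRingEnd ℂ) ((E j) v u) := fun u v =>
      ((hEherm j).apply u v).symm
    have idem : ∀ u v, (E j) u v = ∑ k, (E j) u k * (E j) k v := by
      intro u v
      conv_lhs => rw [← hEidem j]
      rw [Matrix.mul_apply]
    have cconj : ∀ u, (starRingEnd ℂ) (c u) * c u = 1 := by
      intro u
      rw [mul_comm, Complex.mul_conj, Complex.normSq_eq_norm_sq, hc1 u]
      norm_num
    have S3 : ∀ u v, (E j) u v = (starRingEnd ℂ) (c u) * c v * ((E j) v₀ v₀) := by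
      intro u v
      rw [idem u v]
      have h : ∀ k, (E j) u k * (E j) k v
          = (starRingEnd ℂ) (c u) * c v * ((starRingEnd ℂ) ((E j) k v₀) * (E j) k v₀) := by
        intro k
        rw [herm u k, hc2 u k, hc2 v k, _root_.map_mul]
        ring
      rw [Finset.sum_congr rfl (fun k _ => h k), ← Finset.mul_sum]
      congr 1
      rw [idem v₀ v₀]
      exact Finset.sum_congr rfl fun k _ => by
        rw [herm v₀ k]
    set d : ℂ := (E j) v₀ v₀ with hd
    have dnz : d ≠ 0 := by
      intro h0
      apply hEnz j
      ext u v
      simp [S3 u v, h0]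
    have h1 : ∀ k : Fin m, (E j) v₀ k * (E j) k v₀ = d * d := by
      intro k
      rw [S3 v₀ k, S3 k v₀]
      linear_combination ((starRingEnd ℂ) (c k) * c k * d * d) * cconj v₀ + (d * d) * cconj k
    have dmd : d = (m : ℂ) * (d * d) := by
      calc d = ∑ k, (E j) v₀ k * (E j) k v₀ := idem v₀ v₀
        _ = ∑ _k : Fin m, d * d := Finset.sum_congr rfl fun k _ => h1 k
        _ = (m : ℂ) * (d * d) := by
            rw [Finset.sum_const, Finset.card_univ, Fintype.card_fin, nsmul_eq_mul]
    have hfact : d * ((m : ℂ) * d - 1) = 0 := by linear_combination -dmd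
    have dval : d = ((m : ℂ))⁻¹ := by
      rcases mul_eq_zero.mp hfact with h | h
      · exact absurd h dnz
      · exact eq_inv_of_mul_eq_one_right (by linear_combination h)
    exact ⟨c, hc1, S3, dval⟩
  constructor
  · intro j
    obtain ⟨c, hc1, hc2⟩ := key j
    obtain ⟨c', _, _, dval⟩ := main j
    have colnz : (E j)ᵀ v₀ ≠ 0 := by
      intro h0
      have := congrFun h0 v₀
      simp only [Matrix.transpose_apply, Pi.zero_apply] at this
      rw [this] at dval
      exact (inv_ne_zero (Nat.cast_ne_zero.mpr hm.ne' : (m : ℂ) ≠ 0)) dval.symm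
    rw [Matrix.rank_eq_finrank_span_cols]
    have hspan : Submodule.span ℂ (Set.range (E j)ᵀ) = Submodule.span ℂ {(E j)ᵀ v₀} := by
      apply le_antisymm
      · rw [Submodule.span_le]
        rintro _ ⟨u, rfl⟩
        have : (E j)ᵀ u = c u • (E j)ᵀ v₀ := by
          ext i; simp [Matrix.transpose_apply, hc2 u i]
        rw [this]
        exact Submodule.smul_mem _ _ (Submodule.subset_span rfl)
      · exact Submodule.span_mono (Set.singleton_subset_iff.mpr ⟨v₀, rfl⟩)
    rw [show Set.range (E j).col = Set.range (E j)ᵀ from rfl, hspan]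
    exact finrank_span_singleton colnz
  · intro j u v
    obtain ⟨c, hc1, S3, dval⟩ := main j
    constructor
    · rw [S3 u v, dval, norm_mul, norm_mul, Complex.norm_conj, hc1, hc1,
        one_mul, one_mul, norm_inv, Complex.norm_natCast]
    · rw [S3 u u, dval]
      have : (starRingEnd ℂ) (c u) * c u = 1 := by
        rw [mul_comm, Complex.mul_conj, Complex.normSq_eq_norm_sq, hc1 u]; norm_num
      rw [this, one_mul]
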